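/- arXiv:0804.3825 — 3 statements merged into one kernel-verified Lean document; each statement's English description precedes it below -/
import Mathlib

section
/- The function f : [0,1] → ℝ defined by f(η) = h(η/2) − h((1−η)/2) is concave on the interval [0, 1/2] and convex on the interval [1/2, 1]. -/
open MeasureTheory Real

noncomputable def prob {Ω : Type*} [MeasurableSpace Ω] (μ : Measure Ω) {A : Type*}
    (X : Ω → A) (a : A) : ℝ :=
  (μ (X ⁻¹' {a})).toReal

noncomputable def entropy {Ω : Type*} [MeasurableSpace Ω] (μ : Measure Ω) {A : Type*}
    [Fintype A] (X : Ω → A) : ℝ :=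
  ∑ a, Real.negMulLog (prob μ X a)

noncomputable def mutualInfo {Ω : Type*} [MeasurableSpace Ω] (μ : Measure Ω)
    {A B : Type*} [Fintype A] [Fintype B] (X : Ω → A) (Y : Ω → B) : ℝ :=
  entropy μ X + entropy μ Y - entropy μ (fun ω => (X ω, Y ω))

noncomputable def condMutualInfo {Ω : Type*} [MeasurableSpace Ω] (μ : Measure Ω)
    {A B C : Type*} [Fintype A] [Fintype B] [Fintype C]
    (X : Ω → A) (Y : Ω → B) (Z : Ω → C) : ℝ :=
  entropy μ (fun ω => (X ω, Z ω)) + entropy μ (fun ω => (Y ω, Z ω))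
    - entropy μ (fun ω => (X ω, Y ω, Z ω)) - entropy μ Z

/-- `W` and `Y` are conditionally independent given `X` (Markov chain `W → X → Y`). -/
def CondIndepGiven {Ω : Type*} [MeasurableSpace Ω] (μ : Measure Ω) {A B C : Type*}
    (W : Ω → A) (X : Ω → B) (Y : Ω → C) : Prop :=
  ∀ a b c, prob μ (fun ω => (W ω, X ω, Y ω)) (a, b, c) * prob μ X b
    = prob μ (fun ω => (W ω, X ω)) (a, b) * prob μ (fun ω => (X ω, Y ω)) (b, c)

noncomputable def bsscK (x y1 y2 : Bool) : ℝ :=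
  if x = false then (if y2 = false then 1 / 2 else 0)
  else (if y1 = true then 1 / 2 else 0)

def IsBSSC {Ω : Type*} [MeasurableSpace Ω] (μ : Measure Ω) (X Y1 Y2 : Ω → Bool) : Prop :=
  ∀ x y1 y2, prob μ (fun ω => (X ω, Y1 ω, Y2 ω)) (x, y1, y2) = prob μ X x * bsscK x y1 y2

noncomputable def binH (x : ℝ) : ℝ := Real.negMulLog x + Real.negMulLog (1 - x)

noncomputable def fskew (η : ℝ) : ℝ := binH (η / 2) - binH ((1 - η) / 2)


noncomputable def fskew' (η : ℝ) : ℝ :=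
  (1/2) * (Real.log (1 - η/2) - Real.log (η/2) - Real.log ((1-η)/2) + Real.log ((1+η)/2))

noncomputable def fskew'' (η : ℝ) : ℝ := (2*η - 1)/((1 - η^2)*η*(2-η))

lemma hasDerivAt_fskew {η : ℝ} (h : η ∈ Set.Ioo (0:ℝ) 1) :
    HasDerivAt fskew (fskew' η) η := by
  obtain ⟨h0, h1⟩ := h
  have h2 : η/2 ≠ 0 := by positivity
  have h3 : (1:ℝ) - η/2 ≠ 0 := by nlinarith
  have h4 : (1-η)/2 ≠ 0 := ne_of_gt (by linarith)
  have h5 : (1:ℝ) - (1-η)/2 ≠ 0 := by nlinarith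
  have d1 : HasDerivAt (fun η : ℝ => Real.negMulLog (η/2))
      ((-Real.log (η/2) - 1) * (1/2)) η :=
    (Real.hasDerivAt_negMulLog h2).comp (h := fun η : ℝ => η/2) η ((hasDerivAt_id η).div_const 2)
  have d2 : HasDerivAt (fun η : ℝ => Real.negMulLog (1 - η/2))
      ((-Real.log (1 - η/2) - 1) * (-(1/2))) η :=
    (Real.hasDerivAt_negMulLog h3).comp (h := fun η : ℝ => 1 - η/2) η
      (((hasDerivAt_id η).div_const 2).const_sub 1)
  have d3 : HasDerivAt (fun η : ℝ => Real.negMulLog ((1-η)/2))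
      ((-Real.log ((1-η)/2) - 1) * (-(1/2))) η := by
    refine (Real.hasDerivAt_negMulLog h4).comp (h := fun η : ℝ => (1-η)/2) η ?_
    have : HasDerivAt (fun η : ℝ => (1-η)/2) (-1/2) η :=
      (((hasDerivAt_id η).const_sub 1)).div_const 2
    exact this.congr_deriv (by norm_num)
  have d4 : HasDerivAt (fun η : ℝ => Real.negMulLog (1 - (1-η)/2))
      ((-Real.log (1 - (1-η)/2) - 1) * (1/2)) η := by
    refine (Real.hasDerivAt_negMulLog h5).comp (h := fun η : ℝ => 1 - (1-η)/2) η ?_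
    have : HasDerivAt (fun η : ℝ => 1 - (1-η)/2) (1/2) η := by
      have := ((((hasDerivAt_id η).const_sub 1)).div_const 2).const_sub 1
      exact this.congr_deriv (by norm_num)
    exact this
  have := ((d1.add d2).sub (d3.add d4))
  have heq : (fun η : ℝ => Real.negMulLog (η/2) + Real.negMulLog (1 - η/2)
      - (Real.negMulLog ((1-η)/2) + Real.negMulLog (1 - (1-η)/2))) = fskew := by
    funext x; simp only [fskew, binH]
  simp only [Pi.add_def, Pi.sub_def] at this
  rw [heq] at this
  refine this.congr_deriv (Eq.symm ?_)
  have e1 : (1:ℝ) - (1-η)/2 = (1+η)/2 := by ring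
  rw [fskew', e1]; ring

lemma hasDerivAt_fskew' {η : ℝ} (h : η ∈ Set.Ioo (0:ℝ) 1) :
    HasDerivAt fskew' (fskew'' η) η := by
  obtain ⟨h0, h1⟩ := h
  have h2 : η/2 ≠ 0 := by positivity
  have h3 : (1:ℝ) - η/2 ≠ 0 := by nlinarith
  have h4 : (1-η)/2 ≠ 0 := ne_of_gt (by linarith)
  have h5 : (1+η)/2 ≠ 0 := by positivity
  have d1 : HasDerivAt (fun η : ℝ => Real.log (η/2)) ((1/2)/(η/2)) η :=
    (((hasDerivAt_id η).div_const 2)).log h2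
  have d2 : HasDerivAt (fun η : ℝ => Real.log (1 - η/2)) ((-(1/2))/(1 - η/2)) η :=
    ((((hasDerivAt_id η).div_const 2)).const_sub 1).log h3
  have d3 : HasDerivAt (fun η : ℝ => Real.log ((1-η)/2)) ((-(1)/2)/((1-η)/2)) η :=
    ((((hasDerivAt_id η).const_sub 1)).div_const 2).log h4
  have d4 : HasDerivAt (fun η : ℝ => Real.log ((1+η)/2)) (((1)/2)/((1+η)/2)) η := by
    have : HasDerivAt (fun η : ℝ => (1+η)/2) (1/2) η := by
      have := ((hasDerivAt_id η).const_add 1).div_const 2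
      exact this
    exact this.log h5
  have := (((d2.sub d1).sub d3).add d4).const_mul (1/2 : ℝ)
  have heq : (fun η : ℝ => (1/2) * (Real.log (1 - η/2) - Real.log (η/2)
      - Real.log ((1-η)/2) + Real.log ((1+η)/2))) = fskew' := rfl
  simp only [Pi.add_def, Pi.sub_def] at this
  rw [heq] at this
  refine this.congr_deriv (Eq.symm ?_)
  rw [fskew'']
  have hη : η ≠ 0 := ne_of_gt h0
  have h1η : (1:ℝ) - η ≠ 0 := by nlinarith
  have h1η' : (1:ℝ) + η ≠ 0 := by nlinarith
  have h2η : (2:ℝ) - η ≠ 0 := by nlinarith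
  have hne : ((1 - η^2)*η*(2-η)) ≠ 0 := by
    have ha : (0:ℝ) < 1 - η^2 := by nlinarith
    have hb : (0:ℝ) < 2 - η := by linarith
    exact ne_of_gt (by positivity)
  rw [div_eq_iff hne]
  field_simp
  ring

lemma deriv2_fskew {η : ℝ} (h : η ∈ Set.Ioo (0:ℝ) 1) :
    deriv^[2] fskew η = fskew'' η := by
  have hmem : Set.Ioo (0:ℝ) 1 ∈ nhds η := (isOpen_Ioo).mem_nhds h
  have hev : deriv fskew =ᶠ[nhds η] fskew' := by
    filter_upwards [hmem] with x hx
    exact (hasDerivAt_fskew hx).deriv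
  calc deriv^[2] fskew η = deriv (deriv fskew) η := rfl
    _ = deriv fskew' η := hev.deriv_eq
    _ = fskew'' η := (hasDerivAt_fskew' h).deriv

/-- `f(η) = h(η/2) − h((1−η)/2)` is concave on `[0, 1/2]` and convex
on `[1/2, 1]`. -/
theorem stmt7 :
    ConcaveOn ℝ (Set.Icc (0 : ℝ) (1 / 2)) fskew ∧
    ConvexOn ℝ (Set.Icc (1 / 2 : ℝ) 1) fskew := by
  have hcont : Continuous fskew := by
    unfold fskew binH
    fun_prop
  constructor
  · refine (strictConcaveOn_of_deriv2_neg (convex_Icc _ _) hcont.continuousOn ?_).concaveOn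
    intro x hx
    rw [interior_Icc] at hx
    obtain ⟨h0, h1⟩ := hx
    rw [deriv2_fskew ⟨h0, by linarith⟩, fskew'']
    apply div_neg_of_neg_of_pos
    · linarith
    · have : (1:ℝ) - x^2 > 0 := by nlinarith
      have : (2:ℝ) - x > 0 := by linarith
      positivity
  · refine (strictConvexOn_of_deriv2_pos (convex_Icc _ _) hcont.continuousOn ?_).convexOn
    intro x hx
    rw [interior_Icc] at hx
    obtain ⟨h0, h1⟩ := hx
    rw [deriv2_fskew ⟨by linarith, h1⟩, fskew'']
    apply div_pos
    · linarith
    · have : (1:ℝ) - x^2 > 0 := by nlinarith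
      have : (2:ℝ) - x > 0 := by linarith
      positivity
end

section
/- Let f(η) = h(η/2) − h((1−η)/2). Let I be a finite index set, let (v_i)_{i∈I} be nonnegative reals with Σ_i v_i = 1, let (α_i)_{i∈I} be reals in [0,1], and set η = Σ_i v_i·α_i. If η ≤ 1/5, then Σ_i v_i·f(α_i) ≤ f(η). -/
open MeasureTheory Real

section
open Set

noncomputable def fder (x : ℝ) : ℝ :=
  (Real.log (2 - x) - Real.log x + Real.log (1 + x) - Real.log (1 - x)) / 2

noncomputable def fder2 (x : ℝ) : ℝ := (2*x - 1) / (x * (1+x) * (1-x) * (2-x))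

lemma fskew_eq (x : ℝ) : fskew x = negMulLog (x/2) + negMulLog (1 - x/2)
    - negMulLog ((1-x)/2) - negMulLog ((1+x)/2) := by
  have h : (1:ℝ) - (1-x)/2 = (1+x)/2 := by ring
  unfold fskew binH
  rw [h]
  ring

lemma continuous_fskew : Continuous fskew := by
  unfold fskew binH
  fun_prop

lemma hasDerivAt_fskew_s10 {x : ℝ} (h0 : 0 < x) (h1 : x < 1) :
    HasDerivAt fskew (fder x) x := by
  have d1 : HasDerivAt (fun y : ℝ => negMulLog (y/2)) ((-log (x/2) - 1) * (1/2)) x :=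
    (Real.hasDerivAt_negMulLog (by positivity)).comp x ((hasDerivAt_id x).div_const 2)
  have d2 : HasDerivAt (fun y : ℝ => negMulLog (1 - y/2)) ((-log (1 - x/2) - 1) * (0 - 1/2)) x := by
    have hne : (1:ℝ) - x/2 ≠ 0 := by nlinarith
    exact (Real.hasDerivAt_negMulLog hne).comp x
      ((hasDerivAt_const x (1:ℝ)).sub ((hasDerivAt_id x).div_const 2))
  have d3 : HasDerivAt (fun y : ℝ => negMulLog ((1-y)/2)) ((-log ((1-x)/2) - 1) * ((0-1)/2)) x := by
    have hne : ((1:ℝ)-x)/2 ≠ 0 := by intro h; nlinarith [h]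
    exact (Real.hasDerivAt_negMulLog hne).comp x
      (((hasDerivAt_const x (1:ℝ)).sub (hasDerivAt_id x)).div_const 2)
  have d4 : HasDerivAt (fun y : ℝ => negMulLog ((1+y)/2)) ((-log ((1+x)/2) - 1) * ((0+1)/2)) x := by
    have hne : ((1:ℝ)+x)/2 ≠ 0 := by positivity
    exact (Real.hasDerivAt_negMulLog hne).comp x
      (((hasDerivAt_const x (1:ℝ)).add (hasDerivAt_id x)).div_const 2)
  have H := ((d1.add d2).sub d3).sub d4
  have hfun : fskew = fun y => negMulLog (y/2) + negMulLog (1 - y/2)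
      - negMulLog ((1-y)/2) - negMulLog ((1+y)/2) := funext fskew_eq
  rw [hfun]
  refine H.congr_deriv ?_
  have e1 : log (x/2) = log x - log 2 := log_div h0.ne' two_ne_zero
  have e2 : (1:ℝ) - x/2 = (2-x)/2 := by ring
  have e3 : log ((2-x)/2) = log (2-x) - log 2 := log_div (by linarith) two_ne_zero
  have e4 : log ((1-x)/2) = log (1-x) - log 2 := log_div (by linarith) two_ne_zero
  have e5 : log ((1+x)/2) = log (1+x) - log 2 := log_div (by linarith) two_ne_zero
  rw [e2, e1, e3, e4, e5]
  unfold fder; ring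

lemma hasDerivAt_fder {x : ℝ} (h0 : 0 < x) (h1 : x < 1) :
    HasDerivAt fder (fder2 x) x := by
  have l1 : HasDerivAt (fun y : ℝ => log (2 - y)) ((2-x)⁻¹ * (0-1)) x :=
    (Real.hasDerivAt_log (by linarith)).comp x ((hasDerivAt_const x (2:ℝ)).sub (hasDerivAt_id x))
  have l2 : HasDerivAt (fun y : ℝ => log y) x⁻¹ x := Real.hasDerivAt_log h0.ne'
  have l3 : HasDerivAt (fun y : ℝ => log (1 + y)) ((1+x)⁻¹ * (0+1)) x :=
    (Real.hasDerivAt_log (by linarith)).comp x ((hasDerivAt_const x (1:ℝ)).add (hasDerivAt_id x))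
  have l4 : HasDerivAt (fun y : ℝ => log (1 - y)) ((1-x)⁻¹ * (0-1)) x :=
    (Real.hasDerivAt_log (by intro h; nlinarith [h])).comp x
      ((hasDerivAt_const x (1:ℝ)).sub (hasDerivAt_id x))
  have H := (((l1.sub l2).add l3).sub l4).div_const 2
  have hfun : fder = fun y : ℝ =>
      (log (2 - y) - log y + log (1 + y) - log (1 - y)) / 2 := rfl
  rw [hfun]
  refine H.congr_deriv ?_
  unfold fder2
  have p1 : (0:ℝ) < 1 + x := by linarith
  have p2 : (0:ℝ) < 1 - x := by linarith
  have p3 : (0:ℝ) < 2 - x := by linarith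
  field_simp
  ring

lemma fder2_neg {x : ℝ} (h0 : 0 < x) (h1 : x < 1/2) : fder2 x < 0 := by
  unfold fder2
  apply div_neg_of_neg_of_pos (by linarith)
  have a1 : (0:ℝ) < 1 - x := by linarith
  have a2 : (0:ℝ) < 1 + x := by linarith
  have a3 : (0:ℝ) < 2 - x := by linarith
  positivity

lemma fder2_nonneg {x : ℝ} (h0 : 1/2 ≤ x) (h1 : x < 1) : 0 ≤ fder2 x := by
  unfold fder2
  apply div_nonneg (by linarith)
  have h0' : (0:ℝ) < x := by linarith
  have a1 : (0:ℝ) < 1 - x := by linarith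
  have a2 : (0:ℝ) < 1 + x := by linarith
  have a3 : (0:ℝ) < 2 - x := by linarith
  positivity

lemma fder_contOn {D : Set ℝ} (hD : D ⊆ Ioo (0:ℝ) 1) : ContinuousOn fder D :=
  fun y hy => ((hasDerivAt_fder (hD hy).1 (hD hy).2).differentiableAt).continuousAt.continuousWithinAt

lemma fder_strictAnti : StrictAntiOn fder (Ioo (0:ℝ) (1/2)) := by
  apply strictAntiOn_of_deriv_neg (convex_Ioo _ _)
  · exact fder_contOn (Ioo_subset_Ioo le_rfl (by norm_num))
  · intro x hx
    rw [interior_Ioo] at hx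
    rw [(hasDerivAt_fder hx.1 (by linarith [hx.2])).deriv]
    exact fder2_neg hx.1 hx.2

lemma fder_mono : MonotoneOn fder (Ioo (1/2:ℝ) 1) := by
  apply monotoneOn_of_deriv_nonneg (convex_Ioo _ _)
  · exact fder_contOn (Ioo_subset_Ioo (by norm_num) le_rfl)
  · intro x hx
    rw [interior_Ioo] at hx
    exact ((hasDerivAt_fder (by linarith [hx.1]) hx.2).differentiableAt).differentiableWithinAt
  · intro x hx
    rw [interior_Ioo] at hx
    rw [(hasDerivAt_fder (by linarith [hx.1]) hx.2).deriv]
    exact fder2_nonneg hx.1.le hx.2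

lemma fskew_one : fskew 1 = Real.log 2 := by
  rw [fskew_eq]
  norm_num [Real.negMulLog, Real.log_div, Real.log_inv]
  ring

lemma key_identity : fskew (1/5) + fder (1/5) * (1 - 1/5) = Real.log 2 := by
  rw [fskew_eq]
  have h110 : ((1:ℝ)/5)/2 = 1/10 := by norm_num
  have h910 : (1:ℝ) - 1/10 = 9/10 := by norm_num
  have h25 : ((1:ℝ) - 1/5)/2 = 2/5 := by norm_num
  have h35 : ((1:ℝ) + 1/5)/2 = 3/5 := by norm_num
  rw [h110, h910, h25, h35]
  unfold fder
  have e95 : (2:ℝ) - 1/5 = 9/5 := by norm_num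
  have e65 : (1:ℝ) + 1/5 = 6/5 := by norm_num
  have e45 : (1:ℝ) - 1/5 = 4/5 := by norm_num
  rw [e95, e65, e45]
  have l110 : Real.log ((1:ℝ)/10) = -(Real.log 2 + Real.log 5) := by
    rw [one_div, Real.log_inv, show (10:ℝ) = 2*5 by norm_num,
      Real.log_mul two_ne_zero (by norm_num)]
  have l910 : Real.log ((9:ℝ)/10) = 2*Real.log 3 - (Real.log 2 + Real.log 5) := by
    rw [Real.log_div (by norm_num) (by norm_num), show (9:ℝ) = 3^2 by norm_num, Real.log_pow,
      show (10:ℝ) = 2*5 by norm_num, Real.log_mul two_ne_zero (by norm_num)]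
    push_cast; ring
  have l25 : Real.log ((2:ℝ)/5) = Real.log 2 - Real.log 5 :=
    Real.log_div two_ne_zero (by norm_num)
  have l35 : Real.log ((3:ℝ)/5) = Real.log 3 - Real.log 5 :=
    Real.log_div (by norm_num) (by norm_num)
  have l95 : Real.log ((9:ℝ)/5) = 2*Real.log 3 - Real.log 5 := by
    rw [Real.log_div (by norm_num) (by norm_num), show (9:ℝ) = 3^2 by norm_num, Real.log_pow]
    push_cast; ring
  have l15 : Real.log ((1:ℝ)/5) = -Real.log 5 := by rw [one_div, Real.log_inv]
  have l65 : Real.log ((6:ℝ)/5) = Real.log 2 + Real.log 3 - Real.log 5 := by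
    rw [Real.log_div (by norm_num) (by norm_num), show (6:ℝ) = 2*3 by norm_num,
      Real.log_mul two_ne_zero (by norm_num)]
  have l45 : Real.log ((4:ℝ)/5) = 2*Real.log 2 - Real.log 5 := by
    rw [Real.log_div (by norm_num) (by norm_num), show (4:ℝ) = 2^2 by norm_num, Real.log_pow]
    push_cast; ring
  unfold Real.negMulLog
  rw [l110, l910, l25, l35, l95, l15, l65, l45]
  ring

lemma tangent_at_one {η : ℝ} (h0 : 0 < η) (h5 : η ≤ 1/5) :
    Real.log 2 ≤ fskew η + fder η * (1 - η) := by
  set G : ℝ → ℝ := fun y => fskew y + fder y * (1 - y) with hG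
  have hderG : ∀ y ∈ Ioo (0:ℝ) 1, HasDerivAt G (fder2 y * (1 - y)) y := by
    intro y hy
    have h := (hasDerivAt_fskew_s10 hy.1 hy.2).add
      ((hasDerivAt_fder hy.1 hy.2).mul ((hasDerivAt_const y (1:ℝ)).sub (hasDerivAt_id y)))
    refine h.congr_deriv ?_
    simp only [Pi.sub_apply, id]; ring
  have hanti : AntitoneOn G (Icc η (1/5)) := by
    apply antitoneOn_of_deriv_nonpos (convex_Icc _ _)
    · intro y hy
      have hy1 : y ∈ Ioo (0:ℝ) 1 := ⟨lt_of_lt_of_le h0 hy.1, by linarith [hy.2]⟩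
      exact ((hderG y hy1).differentiableAt).continuousAt.continuousWithinAt
    · intro y hy
      rw [interior_Icc] at hy
      have hy1 : y ∈ Ioo (0:ℝ) 1 := ⟨lt_trans h0 hy.1, by linarith [hy.2]⟩
      exact ((hderG y hy1).differentiableAt).differentiableWithinAt
    · intro y hy
      rw [interior_Icc] at hy
      have hy1 : y ∈ Ioo (0:ℝ) 1 := ⟨lt_trans h0 hy.1, by linarith [hy.2]⟩
      rw [(hderG y hy1).deriv]
      have := fder2_neg hy1.1 (by linarith [hy.2] : y < 1/2)
      nlinarith [hy1.2]
  have h1 : G (1/5) ≤ G η := hanti ⟨le_refl η, h5⟩ ⟨h5, le_refl _⟩ h5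
  have h2 : G (1/5) = Real.log 2 := key_identity
  linarith [h1, h2]

lemma tangent_bound {η : ℝ} (h0 : 0 < η) (h5 : η ≤ 1/5) {x : ℝ} (hx : x ∈ Icc (0:ℝ) 1) :
    fskew x ≤ fskew η + fder η * (x - η) := by
  set g : ℝ → ℝ := fun y => fskew η + fder η * (y - η) - fskew y with hg
  have hcont : Continuous g := by
    apply Continuous.sub _ continuous_fskew
    fun_prop
  have hderg : ∀ y ∈ Ioo (0:ℝ) 1, HasDerivAt g (fder η - fder y) y := by
    intro y hy
    have h := (((hasDerivAt_id y).sub_const η).const_mul (fder η)).const_add (fskew η)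
    have h2 := h.sub (hasDerivAt_fskew_s10 hy.1 hy.2)
    refine h2.congr_deriv ?_
    ring
  have hη2 : η < 1/2 := by linarith
  have hηI : η ∈ Ioo (0:ℝ) (1/2) := ⟨h0, hη2⟩
  suffices h : 0 ≤ g x by simpa [hg] using h
  -- g η = 0
  have ghη : g η = 0 := by simp [hg]
  -- nonneg on [0, η]
  have case1 : ∀ y ∈ Icc (0:ℝ) η, 0 ≤ g y := by
    intro y hy
    have hanti : AntitoneOn g (Icc (0:ℝ) η) := by
      apply antitoneOn_of_deriv_nonpos (convex_Icc _ _) hcont.continuousOn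
      · intro z hz
        rw [interior_Icc] at hz
        exact ((hderg z ⟨hz.1, by linarith [hz.2]⟩).differentiableAt).differentiableWithinAt
      · intro z hz
        rw [interior_Icc] at hz
        rw [(hderg z ⟨hz.1, by linarith [hz.2]⟩).deriv]
        have := fder_strictAnti ⟨hz.1, by linarith [hz.2]⟩ hηI hz.2
        linarith
    have := hanti hy ⟨h0.le, le_refl η⟩ hy.2
    linarith [ghη]
  -- nonneg on [η, 1/2]
  have case2 : ∀ y ∈ Icc η (1/2:ℝ), 0 ≤ g y := by
    intro y hy
    have hmono : MonotoneOn g (Icc η (1/2:ℝ)) := by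
      apply monotoneOn_of_deriv_nonneg (convex_Icc _ _) hcont.continuousOn
      · intro z hz
        rw [interior_Icc] at hz
        exact ((hderg z ⟨lt_trans h0 hz.1, by linarith [hz.2]⟩).differentiableAt).differentiableWithinAt
      · intro z hz
        rw [interior_Icc] at hz
        rw [(hderg z ⟨lt_trans h0 hz.1, by linarith [hz.2]⟩).deriv]
        have := fder_strictAnti hηI ⟨lt_trans h0 hz.1, hz.2⟩ hz.1
        linarith
    have := hmono ⟨le_refl η, by linarith⟩ hy hy.1
    linarith [ghη]
  -- nonneg at 1
  have g1 : 0 ≤ g 1 := by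
    have := tangent_at_one h0 h5
    have h1 : fskew 1 = Real.log 2 := fskew_one
    simp only [hg]
    rw [h1]
    linarith
  -- concave on [1/2, 1]
  have case3 : ∀ y ∈ Icc (1/2:ℝ) 1, 0 ≤ g y := by
    have hconc : ConcaveOn ℝ (Icc (1/2:ℝ) 1) g := by
      apply AntitoneOn.concaveOn_of_deriv (convex_Icc _ _) hcont.continuousOn
      · intro z hz
        rw [interior_Icc] at hz
        exact ((hderg z ⟨by linarith [hz.1], hz.2⟩).differentiableAt).differentiableWithinAt
      · rw [interior_Icc]
        intro a ha b hb hab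
        rw [(hderg a ⟨by linarith [ha.1], ha.2⟩).deriv, (hderg b ⟨by linarith [hb.1], hb.2⟩).deriv]
        have := fder_mono ha hb hab
        linarith
    intro y hy
    have ghalf : 0 ≤ g (1/2 : ℝ) := case2 (1/2) ⟨by linarith, le_refl _⟩
    have ha : 0 ≤ 2*(1 - y) := by linarith [hy.2]
    have hb : 0 ≤ 2*y - 1 := by linarith [hy.1]
    have hab : 2*(1-y) + (2*y-1) = 1 := by ring
    have := hconc.2 (Set.left_mem_Icc.2 (by norm_num)) (Set.right_mem_Icc.2 (by norm_num))
      ha hb hab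
    have hyc : (2*(1-y)) • (1/2:ℝ) + (2*y-1) • (1:ℝ) = y := by
      simp [smul_eq_mul]; ring
    rw [hyc] at this
    simp only [smul_eq_mul] at this
    have e1 : 0 ≤ 2*(1-y) * g (1/2) := mul_nonneg ha ghalf
    have e2 : 0 ≤ (2*y-1) * g 1 := mul_nonneg hb g1
    clear_value g
    linarith
  rcases le_total x η with h | h
  · exact case1 x ⟨hx.1, h⟩
  · rcases le_total x (1/2:ℝ) with h' | h'
    · exact case2 x ⟨h, h'⟩
    · exact case3 x ⟨h', hx.2⟩

end

/-- If `(v_i)` is a finite probability vector, `α_i ∈ [0,1]`, and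
`η = Σ_i v_i α_i ≤ 1/5`, then `Σ_i v_i f(α_i) ≤ f(η)`. -/
theorem stmt10 {ι : Type*} (s : Finset ι) (v α : ι → ℝ)
    (hv : ∀ i ∈ s, 0 ≤ v i) (hsum : ∑ i ∈ s, v i = 1)
    (hα : ∀ i ∈ s, α i ∈ Set.Icc (0 : ℝ) 1)
    (η : ℝ) (hη : η = ∑ i ∈ s, v i * α i) (hle : η ≤ 1 / 5) :
    ∑ i ∈ s, v i * fskew (α i) ≤ fskew η := by
  have hηnn : 0 ≤ η := by
    rw [hη]
    exact Finset.sum_nonneg fun i hi => mul_nonneg (hv i hi) (hα i hi).1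
  rcases eq_or_lt_of_le hηnn with h0 | h0
  · have hzero : ∀ i ∈ s, v i * α i = 0 :=
      (Finset.sum_eq_zero_iff_of_nonneg
        (fun i hi => mul_nonneg (hv i hi) (hα i hi).1)).1 (by rw [← hη, ← h0])
    have heq : ∑ i ∈ s, v i * fskew (α i) = ∑ i ∈ s, v i * fskew 0 := by
      apply Finset.sum_congr rfl
      intro i hi
      rcases mul_eq_zero.1 (hzero i hi) with h | h
      · rw [h, zero_mul, zero_mul]
      · rw [h]
    rw [heq, ← Finset.sum_mul, hsum, one_mul, ← h0]
  · calc ∑ i ∈ s, v i * fskew (α i)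
        ≤ ∑ i ∈ s, v i * (fskew η + fder η * (α i - η)) := by
          apply Finset.sum_le_sum
          intro i hi
          exact mul_le_mul_of_nonneg_left (tangent_bound h0 hle (hα i hi)) (hv i hi)
      _ = ∑ i ∈ s, (fskew η * v i + fder η * (v i * α i) - fder η * η * v i) :=
          Finset.sum_congr rfl fun i _ => by ring
      _ = fskew η * (∑ i ∈ s, v i) + fder η * (∑ i ∈ s, v i * α i)
            - fder η * η * (∑ i ∈ s, v i) := by
          rw [Finset.sum_sub_distrib, Finset.sum_add_distrib, ← Finset.mul_sum,
            ← Finset.mul_sum, ← Finset.mul_sum]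
      _ = fskew η := by rw [hsum, ← hη]; ring
end

section
/- Let U, V, X, Y1, Y2 be finitely-valued random variables on a probability space such that (Y1,Y2) is conditionally independent of (U,V) given X. Then I(U;Y1) + I(V;Y2) − I(U;V) ≤ I(X;Y1) + I(V;Y2) − I(V;Y1). -/
open MeasureTheory Real

section Aux
variable {Ω : Type*} [MeasurableSpace Ω] (μ : Measure Ω)

lemma prob_nonneg {A : Type*} (X : Ω → A) (a : A) : 0 ≤ prob μ X a := ENNReal.toReal_nonneg

lemma prob_congr {A B : Type*} {f : Ω → A} {g : Ω → B} {a : A} {b : B}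
    (h : f ⁻¹' {a} = g ⁻¹' {b}) : prob μ f a = prob μ g b := by
  unfold prob; rw [h]

lemma prob_comp [IsFiniteMeasure μ] {A B : Type*} [Fintype A] [DecidableEq B]
    {T : Ω → A} (hT : ∀ a, MeasurableSet (T ⁻¹' {a})) (g : A → B) (b : B) :
    prob μ (fun ω => g (T ω)) b
      = ∑ a ∈ Finset.univ.filter (fun a => g a = b), prob μ T a := by
  classical
  have hset : (fun ω => g (T ω)) ⁻¹' {b}
      = ⋃ a ∈ (Finset.univ.filter (fun a => g a = b) : Finset A), T ⁻¹' {a} := by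
    ext ω
    simp only [Set.mem_preimage, Set.mem_singleton_iff, Set.mem_iUnion, Finset.mem_filter,
      Finset.mem_univ, true_and]
    constructor
    · intro h; exact ⟨T ω, h, rfl⟩
    · rintro ⟨a, h1, h2⟩; rw [h2]; exact h1
  have hdisj : ((Finset.univ.filter (fun a => g a = b) : Finset A) : Set A).PairwiseDisjoint
      (fun a => T ⁻¹' {a}) := by
    intro a _ a' _ hne
    refine Set.disjoint_left.mpr ?_
    intro ω h1 h2
    exact hne (by simp only [Set.mem_preimage, Set.mem_singleton_iff] at h1 h2; rw [← h1, ← h2])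
  rw [prob, hset, measure_biUnion_finset hdisj (fun a _ => hT a)]
  exact ENNReal.toReal_sum (fun a _ => measure_ne_top μ _)

lemma sum_prob [IsProbabilityMeasure μ] {A : Type*} [Fintype A] {T : Ω → A}
    (hT : ∀ a, MeasurableSet (T ⁻¹' {a})) :
    ∑ a, prob μ T a = 1 := by
  classical
  have hdisj : ((Finset.univ : Finset A) : Set A).PairwiseDisjoint (fun a => T ⁻¹' {a}) := by
    intro a _ a' _ hne
    refine Set.disjoint_left.mpr ?_
    intro ω h1 h2
    exact hne (by simp only [Set.mem_preimage, Set.mem_singleton_iff] at h1 h2; rw [← h1, ← h2])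
  have hset : (Set.univ : Set Ω) = ⋃ a ∈ (Finset.univ : Finset A), T ⁻¹' {a} := by
    ext ω; simp
  have h1 : ∑ a ∈ Finset.univ, μ (T ⁻¹' {a}) = 1 := by
    rw [← measure_biUnion_finset hdisj (fun a _ => hT a), ← hset, measure_univ]
  calc ∑ a, prob μ T a = (∑ a ∈ Finset.univ, μ (T ⁻¹' {a})).toReal :=
        (ENNReal.toReal_sum (fun a _ => measure_ne_top μ _)).symm
    _ = 1 := by rw [h1]; rfl

lemma prob_le_comp [IsFiniteMeasure μ] {A B : Type*} [Fintype A]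
    {T : Ω → A} (hT : ∀ a, MeasurableSet (T ⁻¹' {a})) (g : A → B) (a : A) :
    prob μ T a ≤ prob μ (fun ω => g (T ω)) (g a) := by
  classical
  rw [prob_comp μ hT g (g a)]
  exact Finset.single_le_sum (f := fun a => prob μ T a)
    (fun i _ => prob_nonneg μ T i) (by simp)

lemma entropy_comp [IsFiniteMeasure μ] {A B : Type*} [Fintype A] [Fintype B]
    {T : Ω → A} (hT : ∀ a, MeasurableSet (T ⁻¹' {a})) (g : A → B) :
    entropy μ (fun ω => g (T ω))
      = -∑ a, prob μ T a * Real.log (prob μ (fun ω => g (T ω)) (g a)) := by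
  classical
  unfold entropy
  have key : ∀ b : B, Real.negMulLog (prob μ (fun ω => g (T ω)) b)
      = ∑ a ∈ Finset.univ.filter (fun a => g a = b),
          -(prob μ T a * Real.log (prob μ (fun ω => g (T ω)) (g a))) := by
    intro b
    rw [Real.negMulLog, prob_comp μ hT g b, neg_mul, Finset.sum_mul, ← Finset.sum_neg_distrib]
    apply Finset.sum_congr rfl
    intro a ha
    simp only [Finset.mem_filter, Finset.mem_univ, true_and] at ha
    rw [ha, ← prob_comp μ hT g b]
  rw [Finset.sum_congr rfl (fun b _ => key b), ← Finset.sum_neg_distrib]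
  exact Finset.sum_fiberwise _ _ _

lemma prob_marg [IsFiniteMeasure μ] {C D : Type*} [Fintype D]
    {F : Ω → C} {G : Ω → D}
    (hF : ∀ c, MeasurableSet (F ⁻¹' {c})) (hG : ∀ d, MeasurableSet (G ⁻¹' {d})) (c : C) :
    prob μ F c = ∑ d, prob μ (fun ω => (F ω, G ω)) (c, d) := by
  classical
  have hpre : ∀ d : D, (fun ω => (F ω, G ω)) ⁻¹' {(c, d)} = F ⁻¹' {c} ∩ G ⁻¹' {d} := by
    intro d; ext ω; simp [Prod.ext_iff]
  have hset : F ⁻¹' {c} = ⋃ d ∈ (Finset.univ : Finset D), F ⁻¹' {c} ∩ G ⁻¹' {d} := by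
    ext ω; simp
  have hdisj : ((Finset.univ : Finset D) : Set D).PairwiseDisjoint
      (fun d => F ⁻¹' {c} ∩ G ⁻¹' {d}) := by
    intro d _ d' _ hne
    refine Set.disjoint_left.mpr ?_
    intro ω h1 h2
    exact hne (by
      simp only [Set.mem_inter_iff, Set.mem_preimage, Set.mem_singleton_iff] at h1 h2
      rw [← h1.2, ← h2.2])
  have hmeas : μ (F ⁻¹' {c}) = ∑ d ∈ Finset.univ, μ (F ⁻¹' {c} ∩ G ⁻¹' {d}) := by
    conv_lhs => rw [hset]
    exact measure_biUnion_finset hdisj (fun d _ => (hF c).inter (hG d))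
  calc prob μ F c = (∑ d ∈ Finset.univ, μ (F ⁻¹' {c} ∩ G ⁻¹' {d})).toReal := by
        rw [prob, hmeas]
    _ = ∑ d, prob μ (fun ω => (F ω, G ω)) (c, d) := by
        rw [ENNReal.toReal_sum (fun a _ => measure_ne_top μ _)]
        exact Finset.sum_congr rfl fun d _ => by rw [prob, hpre d]

lemma msetPair {C D : Type*} {F : Ω → C} {G : Ω → D}
    (hF : ∀ c, MeasurableSet (F ⁻¹' {c})) (hG : ∀ d, MeasurableSet (G ⁻¹' {d})) :
    ∀ cd : C × D, MeasurableSet ((fun ω => (F ω, G ω)) ⁻¹' {cd}) := by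
  rintro ⟨c, d⟩
  have : (fun ω => (F ω, G ω)) ⁻¹' {(c, d)} = F ⁻¹' {c} ∩ G ⁻¹' {d} := by
    ext ω; simp [Prod.ext_iff]
  rw [this]; exact (hF c).inter (hG d)

lemma cancel_le {a c d : ℝ} (ha : 0 ≤ a) (hc : 0 ≤ c) (hd : 0 ≤ d) :
    a * c / (a * d) ≤ c / d := by
  rcases eq_or_lt_of_le ha with h | h
  · rw [← h]; simp [div_nonneg hc hd]
  · rw [mul_div_mul_left _ _ (ne_of_gt h)]

lemma cancel_le' {a c : ℝ} (ha : 0 ≤ a) (hc : 0 ≤ c) : a * c / a ≤ c := by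
  have h := cancel_le (d := 1) ha hc zero_le_one
  simpa using h

end Aux

/-- If `(U,V) → X → (Y₁,Y₂)` is a Markov chain, then
`I(U;Y₁) + I(V;Y₂) − I(U;V) ≤ I(X;Y₁) + I(V;Y₂) − I(V;Y₁)`. -/
theorem stmt12 {Ω A B 𝒳 𝒴₁ 𝒴₂ : Type*} [MeasurableSpace Ω]
    (μ : Measure Ω) [IsProbabilityMeasure μ]
    [Fintype A] [MeasurableSpace A] [MeasurableSingletonClass A]
    [Fintype B] [MeasurableSpace B] [MeasurableSingletonClass B]
    [Fintype 𝒳] [MeasurableSpace 𝒳] [MeasurableSingletonClass 𝒳]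
    [Fintype 𝒴₁] [MeasurableSpace 𝒴₁] [MeasurableSingletonClass 𝒴₁]
    [Fintype 𝒴₂] [MeasurableSpace 𝒴₂] [MeasurableSingletonClass 𝒴₂]
    (U : Ω → A) (V : Ω → B) (X : Ω → 𝒳) (Y1 : Ω → 𝒴₁) (Y2 : Ω → 𝒴₂)
    (hU : Measurable U) (hV : Measurable V) (hX : Measurable X)
    (hY1 : Measurable Y1) (hY2 : Measurable Y2)
    (hMarkov : CondIndepGiven μ (fun ω => (U ω, V ω)) X (fun ω => (Y1 ω, Y2 ω))) :
    mutualInfo μ U Y1 + mutualInfo μ V Y2 - mutualInfo μ U V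
      ≤ mutualInfo μ X Y1 + mutualInfo μ V Y2 - mutualInfo μ V Y1 := by
  classical
  have hsU : ∀ a, MeasurableSet (U ⁻¹' {a}) := fun a => hU (measurableSet_singleton a)
  have hsV : ∀ a, MeasurableSet (V ⁻¹' {a}) := fun a => hV (measurableSet_singleton a)
  have hsX : ∀ a, MeasurableSet (X ⁻¹' {a}) := fun a => hX (measurableSet_singleton a)
  have hsY1 : ∀ a, MeasurableSet (Y1 ⁻¹' {a}) := fun a => hY1 (measurableSet_singleton a)
  have hsY2 : ∀ a, MeasurableSet (Y2 ⁻¹' {a}) := fun a => hY2 (measurableSet_singleton a)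
  have hsXY : ∀ c, MeasurableSet ((fun ω => (X ω, Y1 ω)) ⁻¹' {c}) := msetPair hsX hsY1
  have hsVXY : ∀ c, MeasurableSet ((fun ω => (V ω, X ω, Y1 ω)) ⁻¹' {c}) := msetPair hsV hsXY
  have hsT4 : ∀ c, MeasurableSet ((fun ω => (U ω, V ω, X ω, Y1 ω)) ⁻¹' {c}) :=
    msetPair hsU hsVXY
  have hsUV : ∀ c, MeasurableSet ((fun ω => (U ω, V ω)) ⁻¹' {c}) := msetPair hsU hsV
  -- entropy expansions over the joint distribution
  have hEUV : entropy μ (fun ω => (U ω, V ω))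
      = -∑ s : A × B × 𝒳 × 𝒴₁, prob μ (fun ω => (U ω, V ω, X ω, Y1 ω)) s *
          Real.log (prob μ (fun ω => (U ω, V ω)) (s.1, s.2.1)) :=
    entropy_comp μ hsT4 (fun s => (s.1, s.2.1))
  have hEXY : entropy μ (fun ω => (X ω, Y1 ω))
      = -∑ s : A × B × 𝒳 × 𝒴₁, prob μ (fun ω => (U ω, V ω, X ω, Y1 ω)) s *
          Real.log (prob μ (fun ω => (X ω, Y1 ω)) (s.2.2.1, s.2.2.2)) :=
    entropy_comp μ hsT4 (fun s => (s.2.2.1, s.2.2.2))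
  have hEY : entropy μ Y1
      = -∑ s : A × B × 𝒳 × 𝒴₁, prob μ (fun ω => (U ω, V ω, X ω, Y1 ω)) s *
          Real.log (prob μ Y1 s.2.2.2) :=
    entropy_comp μ hsT4 (fun s => s.2.2.2)
  have hEUY : entropy μ (fun ω => (U ω, Y1 ω))
      = -∑ s : A × B × 𝒳 × 𝒴₁, prob μ (fun ω => (U ω, V ω, X ω, Y1 ω)) s *
          Real.log (prob μ (fun ω => (U ω, Y1 ω)) (s.1, s.2.2.2)) :=
    entropy_comp μ hsT4 (fun s => (s.1, s.2.2.2))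
  have hEVY : entropy μ (fun ω => (V ω, Y1 ω))
      = -∑ s : A × B × 𝒳 × 𝒴₁, prob μ (fun ω => (U ω, V ω, X ω, Y1 ω)) s *
          Real.log (prob μ (fun ω => (V ω, Y1 ω)) (s.2.1, s.2.2.2)) :=
    entropy_comp μ hsT4 (fun s => (s.2.1, s.2.2.2))
  have hEX : entropy μ X
      = -∑ s : A × B × 𝒳 × 𝒴₁, prob μ (fun ω => (U ω, V ω, X ω, Y1 ω)) s *
          Real.log (prob μ X s.2.2.1) :=
    entropy_comp μ hsT4 (fun s => s.2.2.1)
  -- pointwise domination by marginals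
  have hpUV : ∀ s : A × B × 𝒳 × 𝒴₁, prob μ (fun ω => (U ω, V ω, X ω, Y1 ω)) s
      ≤ prob μ (fun ω => (U ω, V ω)) (s.1, s.2.1) :=
    fun s => prob_le_comp μ hsT4 (fun s => (s.1, s.2.1)) s
  have hpXY : ∀ s : A × B × 𝒳 × 𝒴₁, prob μ (fun ω => (U ω, V ω, X ω, Y1 ω)) s
      ≤ prob μ (fun ω => (X ω, Y1 ω)) (s.2.2.1, s.2.2.2) :=
    fun s => prob_le_comp μ hsT4 (fun s => (s.2.2.1, s.2.2.2)) s
  have hpY : ∀ s : A × B × 𝒳 × 𝒴₁, prob μ (fun ω => (U ω, V ω, X ω, Y1 ω)) s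
      ≤ prob μ Y1 s.2.2.2 :=
    fun s => prob_le_comp μ hsT4 (fun s => s.2.2.2) s
  have hpUY : ∀ s : A × B × 𝒳 × 𝒴₁, prob μ (fun ω => (U ω, V ω, X ω, Y1 ω)) s
      ≤ prob μ (fun ω => (U ω, Y1 ω)) (s.1, s.2.2.2) :=
    fun s => prob_le_comp μ hsT4 (fun s => (s.1, s.2.2.2)) s
  have hpVY : ∀ s : A × B × 𝒳 × 𝒴₁, prob μ (fun ω => (U ω, V ω, X ω, Y1 ω)) s
      ≤ prob μ (fun ω => (V ω, Y1 ω)) (s.2.1, s.2.2.2) :=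
    fun s => prob_le_comp μ hsT4 (fun s => (s.2.1, s.2.2.2)) s
  have hpX : ∀ s : A × B × 𝒳 × 𝒴₁, prob μ (fun ω => (U ω, V ω, X ω, Y1 ω)) s
      ≤ prob μ X s.2.2.1 :=
    fun s => prob_le_comp μ hsT4 (fun s => s.2.2.1) s
  have hpUVX : ∀ s : A × B × 𝒳 × 𝒴₁, prob μ (fun ω => (U ω, V ω, X ω, Y1 ω)) s
      ≤ prob μ (fun ω => (U ω, V ω, X ω)) (s.1, s.2.1, s.2.2.1) :=
    fun s => prob_le_comp μ hsT4 (fun s => (s.1, s.2.1, s.2.2.1)) s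
  -- marginalized Markov property
  have hMM : ∀ u v x y, prob μ (fun ω => (U ω, V ω, X ω, Y1 ω)) (u, v, x, y) * prob μ X x
      = prob μ (fun ω => (U ω, V ω, X ω)) (u, v, x) *
          prob μ (fun ω => (X ω, Y1 ω)) (x, y) := by
    intro u v x y
    have e1 : prob μ (fun ω => (U ω, V ω, X ω, Y1 ω)) (u, v, x, y)
        = ∑ y2, prob μ (fun ω => ((U ω, V ω), X ω, (Y1 ω, Y2 ω))) ((u, v), x, (y, y2)) := by
      rw [prob_marg μ hsT4 hsY2 (u, v, x, y)]
      exact Finset.sum_congr rfl fun y2 _ =>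
        prob_congr μ (by ext ω; simp [Prod.ext_iff]; tauto)
    have e2 : prob μ (fun ω => (X ω, Y1 ω)) (x, y)
        = ∑ y2, prob μ (fun ω => (X ω, (Y1 ω, Y2 ω))) (x, (y, y2)) := by
      rw [prob_marg μ hsXY hsY2 (x, y)]
      exact Finset.sum_congr rfl fun y2 _ =>
        prob_congr μ (by ext ω; simp [Prod.ext_iff]; tauto)
    have e3 : prob μ (fun ω => (U ω, V ω, X ω)) (u, v, x)
        = prob μ (fun ω => ((U ω, V ω), X ω)) ((u, v), x) :=
      prob_congr μ (by ext ω; simp [Prod.ext_iff]; tauto)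
    rw [e1, e2, e3, Finset.sum_mul, Finset.mul_sum]
    exact Finset.sum_congr rfl fun y2 _ => hMarkov (u, v) x (y, y2)
  -- marginalization identities
  have hMargUV : ∀ u v, prob μ (fun ω => (U ω, V ω)) (u, v)
      = ∑ x, prob μ (fun ω => (U ω, V ω, X ω)) (u, v, x) := by
    intro u v
    rw [prob_marg μ hsUV hsX (u, v)]
    exact Finset.sum_congr rfl fun x _ =>
      prob_congr μ (by ext ω; simp [Prod.ext_iff]; tauto)
  have hMargY : ∀ y, prob μ Y1 y = ∑ v, prob μ (fun ω => (V ω, Y1 ω)) (v, y) := by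
    intro y
    rw [prob_marg μ hsY1 hsV y]
    exact Finset.sum_congr rfl fun v _ =>
      prob_congr μ (by ext ω; simp [Prod.ext_iff]; tauto)
  have hsumUY : ∑ u, ∑ y, prob μ (fun ω => (U ω, Y1 ω)) (u, y) = 1 := by
    rw [← Fintype.sum_prod_type]
    exact sum_prob μ (msetPair hsU hsY1)
  have hsumP : ∑ s : A × B × 𝒳 × 𝒴₁, prob μ (fun ω => (U ω, V ω, X ω, Y1 ω)) s = 1 :=
    sum_prob μ hsT4
  -- the comparison distribution
  set q : A × B × 𝒳 × 𝒴₁ → ℝ := fun s =>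
    prob μ (fun ω => (U ω, V ω, X ω)) (s.1, s.2.1, s.2.2.1) *
      (prob μ (fun ω => (U ω, Y1 ω)) (s.1, s.2.2.2) *
        prob μ (fun ω => (V ω, Y1 ω)) (s.2.1, s.2.2.2)) /
      (prob μ (fun ω => (U ω, V ω)) (s.1, s.2.1) * prob μ Y1 s.2.2.2) with hq_def
  have hq0 : ∀ s, 0 ≤ q s := by
    intro s
    exact div_nonneg (mul_nonneg (prob_nonneg μ _ _)
      (mul_nonneg (prob_nonneg μ _ _) (prob_nonneg μ _ _)))
      (mul_nonneg (prob_nonneg μ _ _) (prob_nonneg μ _ _))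
  -- q sums to at most one
  have step_x : ∀ u v y, ∑ x, q (u, v, x, y)
      ≤ prob μ (fun ω => (U ω, Y1 ω)) (u, y) * prob μ (fun ω => (V ω, Y1 ω)) (v, y)
          / prob μ Y1 y := by
    intro u v y
    have h1 : ∑ x, q (u, v, x, y)
        = prob μ (fun ω => (U ω, V ω)) (u, v) *
            (prob μ (fun ω => (U ω, Y1 ω)) (u, y) * prob μ (fun ω => (V ω, Y1 ω)) (v, y)) /
          (prob μ (fun ω => (U ω, V ω)) (u, v) * prob μ Y1 y) := by
      simp only [hq_def]
      rw [← Finset.sum_div, ← Finset.sum_mul, ← hMargUV u v]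
    rw [h1]
    exact cancel_le (prob_nonneg μ _ _)
      (mul_nonneg (prob_nonneg μ _ _) (prob_nonneg μ _ _)) (prob_nonneg μ _ _)
  have step_v : ∀ u y, ∑ v, prob μ (fun ω => (U ω, Y1 ω)) (u, y) *
        prob μ (fun ω => (V ω, Y1 ω)) (v, y) / prob μ Y1 y
      ≤ prob μ (fun ω => (U ω, Y1 ω)) (u, y) := by
    intro u y
    have h1 : ∑ v, prob μ (fun ω => (U ω, Y1 ω)) (u, y) *
          prob μ (fun ω => (V ω, Y1 ω)) (v, y) / prob μ Y1 y
        = prob μ Y1 y * prob μ (fun ω => (U ω, Y1 ω)) (u, y) / prob μ Y1 y := by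
      rw [← Finset.sum_div, ← Finset.mul_sum, ← hMargY y, mul_comm]
    rw [h1]
    exact cancel_le' (prob_nonneg μ _ _) (prob_nonneg μ _ _)
  have hqsum : ∑ s, q s ≤ 1 := by
    have hrw : ∑ s, q s = ∑ u, ∑ v, ∑ y, ∑ x, q (u, v, x, y) := by
      rw [Fintype.sum_prod_type]
      refine Finset.sum_congr rfl fun u _ => ?_
      rw [Fintype.sum_prod_type]
      refine Finset.sum_congr rfl fun v _ => ?_
      rw [Fintype.sum_prod_type]
      exact Finset.sum_comm
    calc ∑ s, q s = ∑ u, ∑ v, ∑ y, ∑ x, q (u, v, x, y) := hrw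
      _ ≤ ∑ u, ∑ v, ∑ y, (prob μ (fun ω => (U ω, Y1 ω)) (u, y) *
            prob μ (fun ω => (V ω, Y1 ω)) (v, y) / prob μ Y1 y) := by
          refine Finset.sum_le_sum fun u _ => Finset.sum_le_sum fun v _ =>
            Finset.sum_le_sum fun y _ => step_x u v y
      _ = ∑ u, ∑ y, ∑ v, (prob μ (fun ω => (U ω, Y1 ω)) (u, y) *
            prob μ (fun ω => (V ω, Y1 ω)) (v, y) / prob μ Y1 y) := by
          exact Finset.sum_congr rfl fun u _ => Finset.sum_comm
      _ ≤ ∑ u, ∑ y, prob μ (fun ω => (U ω, Y1 ω)) (u, y) := by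
          exact Finset.sum_le_sum fun u _ => Finset.sum_le_sum fun y _ => step_v u y
      _ = 1 := hsumUY
  -- the pointwise Gibbs-type bound
  have hterm : ∀ s : A × B × 𝒳 × 𝒴₁,
      prob μ (fun ω => (U ω, V ω, X ω, Y1 ω)) s *
        (Real.log (prob μ (fun ω => (U ω, Y1 ω)) (s.1, s.2.2.2))
          + Real.log (prob μ (fun ω => (V ω, Y1 ω)) (s.2.1, s.2.2.2))
          + Real.log (prob μ X s.2.2.1)
          - Real.log (prob μ (fun ω => (U ω, V ω)) (s.1, s.2.1))
          - Real.log (prob μ (fun ω => (X ω, Y1 ω)) (s.2.2.1, s.2.2.2))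
          - Real.log (prob μ Y1 s.2.2.2))
      ≤ q s - prob μ (fun ω => (U ω, V ω, X ω, Y1 ω)) s := by
    intro s
    rcases eq_or_lt_of_le (prob_nonneg μ (fun ω => (U ω, V ω, X ω, Y1 ω)) s) with h | hp
    · rw [← h]
      simpa using hq0 s
    · obtain ⟨u, v, x, y⟩ := s
      have hUVX := lt_of_lt_of_le hp (hpUVX (u, v, x, y))
      have hUY := lt_of_lt_of_le hp (hpUY (u, v, x, y))
      have hVY := lt_of_lt_of_le hp (hpVY (u, v, x, y))
      have hUVp := lt_of_lt_of_le hp (hpUV (u, v, x, y))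
      have hXYp := lt_of_lt_of_le hp (hpXY (u, v, x, y))
      have hXp := lt_of_lt_of_le hp (hpX (u, v, x, y))
      have hYp := lt_of_lt_of_le hp (hpY (u, v, x, y))
      have hqpos : 0 < q (u, v, x, y) := by
        simp only [hq_def]
        exact div_pos (mul_pos hUVX (mul_pos hUY hVY)) (mul_pos hUVp hYp)
      have hlogm : Real.log (prob μ (fun ω => (U ω, V ω, X ω, Y1 ω)) (u, v, x, y))
            + Real.log (prob μ X x)
          = Real.log (prob μ (fun ω => (U ω, V ω, X ω)) (u, v, x))
            + Real.log (prob μ (fun ω => (X ω, Y1 ω)) (x, y)) := by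
        rw [← Real.log_mul hp.ne' hXp.ne', ← Real.log_mul hUVX.ne' hXYp.ne', hMM u v x y]
      have hlogq : Real.log (q (u, v, x, y))
          = Real.log (prob μ (fun ω => (U ω, V ω, X ω)) (u, v, x))
            + (Real.log (prob μ (fun ω => (U ω, Y1 ω)) (u, y))
              + Real.log (prob μ (fun ω => (V ω, Y1 ω)) (v, y)))
            - (Real.log (prob μ (fun ω => (U ω, V ω)) (u, v)) + Real.log (prob μ Y1 y)) := by
        simp only [hq_def]
        rw [Real.log_div (by positivity) (by positivity),
          Real.log_mul hUVX.ne' (by positivity),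
          Real.log_mul hUY.ne' hVY.ne', Real.log_mul hUVp.ne' hYp.ne']
      have h1 : Real.log (q (u, v, x, y) / prob μ (fun ω => (U ω, V ω, X ω, Y1 ω)) (u, v, x, y))
          ≤ q (u, v, x, y) / prob μ (fun ω => (U ω, V ω, X ω, Y1 ω)) (u, v, x, y) - 1 :=
        Real.log_le_sub_one_of_pos (div_pos hqpos hp)
      rw [Real.log_div hqpos.ne' hp.ne'] at h1
      have h2 : prob μ (fun ω => (U ω, V ω, X ω, Y1 ω)) (u, v, x, y) *
            (Real.log (q (u, v, x, y))
              - Real.log (prob μ (fun ω => (U ω, V ω, X ω, Y1 ω)) (u, v, x, y)))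
          ≤ q (u, v, x, y) - prob μ (fun ω => (U ω, V ω, X ω, Y1 ω)) (u, v, x, y) := by
        calc prob μ (fun ω => (U ω, V ω, X ω, Y1 ω)) (u, v, x, y) *
              (Real.log (q (u, v, x, y))
                - Real.log (prob μ (fun ω => (U ω, V ω, X ω, Y1 ω)) (u, v, x, y)))
            ≤ prob μ (fun ω => (U ω, V ω, X ω, Y1 ω)) (u, v, x, y) *
              (q (u, v, x, y) / prob μ (fun ω => (U ω, V ω, X ω, Y1 ω)) (u, v, x, y) - 1) :=
              mul_le_mul_of_nonneg_left h1 hp.le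
          _ = q (u, v, x, y) - prob μ (fun ω => (U ω, V ω, X ω, Y1 ω)) (u, v, x, y) := by
              field_simp
      have heq : Real.log (prob μ (fun ω => (U ω, Y1 ω)) (u, y))
            + Real.log (prob μ (fun ω => (V ω, Y1 ω)) (v, y))
            + Real.log (prob μ X x)
            - Real.log (prob μ (fun ω => (U ω, V ω)) (u, v))
            - Real.log (prob μ (fun ω => (X ω, Y1 ω)) (x, y))
            - Real.log (prob μ Y1 y)
          = Real.log (q (u, v, x, y))
            - Real.log (prob μ (fun ω => (U ω, V ω, X ω, Y1 ω)) (u, v, x, y)) := by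
        rw [hlogq]; linarith [hlogm]
      calc prob μ (fun ω => (U ω, V ω, X ω, Y1 ω)) (u, v, x, y) *
            (Real.log (prob μ (fun ω => (U ω, Y1 ω)) (u, y))
              + Real.log (prob μ (fun ω => (V ω, Y1 ω)) (v, y))
              + Real.log (prob μ X x)
              - Real.log (prob μ (fun ω => (U ω, V ω)) (u, v))
              - Real.log (prob μ (fun ω => (X ω, Y1 ω)) (x, y))
              - Real.log (prob μ Y1 y))
          = prob μ (fun ω => (U ω, V ω, X ω, Y1 ω)) (u, v, x, y) *
            (Real.log (q (u, v, x, y))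
              - Real.log (prob μ (fun ω => (U ω, V ω, X ω, Y1 ω)) (u, v, x, y))) := by
            rw [heq]
        _ ≤ q (u, v, x, y) - prob μ (fun ω => (U ω, V ω, X ω, Y1 ω)) (u, v, x, y) := h2
  -- sum up
  have key : ∑ s : A × B × 𝒳 × 𝒴₁,
      prob μ (fun ω => (U ω, V ω, X ω, Y1 ω)) s *
        (Real.log (prob μ (fun ω => (U ω, Y1 ω)) (s.1, s.2.2.2))
          + Real.log (prob μ (fun ω => (V ω, Y1 ω)) (s.2.1, s.2.2.2))
          + Real.log (prob μ X s.2.2.1)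
          - Real.log (prob μ (fun ω => (U ω, V ω)) (s.1, s.2.1))
          - Real.log (prob μ (fun ω => (X ω, Y1 ω)) (s.2.2.1, s.2.2.2))
          - Real.log (prob μ Y1 s.2.2.2)) ≤ 0 := by
    calc _ ≤ ∑ s : A × B × 𝒳 × 𝒴₁,
          (q s - prob μ (fun ω => (U ω, V ω, X ω, Y1 ω)) s) :=
          Finset.sum_le_sum fun s _ => hterm s
      _ = ∑ s, q s - ∑ s : A × B × 𝒳 × 𝒴₁, prob μ (fun ω => (U ω, V ω, X ω, Y1 ω)) s :=
          Finset.sum_sub_distrib _ _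
      _ ≤ 0 := by rw [hsumP]; linarith [hqsum]
  have key' : (∑ s : A × B × 𝒳 × 𝒴₁, prob μ (fun ω => (U ω, V ω, X ω, Y1 ω)) s *
          Real.log (prob μ (fun ω => (U ω, Y1 ω)) (s.1, s.2.2.2)))
      + (∑ s : A × B × 𝒳 × 𝒴₁, prob μ (fun ω => (U ω, V ω, X ω, Y1 ω)) s *
          Real.log (prob μ (fun ω => (V ω, Y1 ω)) (s.2.1, s.2.2.2)))
      + (∑ s : A × B × 𝒳 × 𝒴₁, prob μ (fun ω => (U ω, V ω, X ω, Y1 ω)) s *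
          Real.log (prob μ X s.2.2.1))
      - (∑ s : A × B × 𝒳 × 𝒴₁, prob μ (fun ω => (U ω, V ω, X ω, Y1 ω)) s *
          Real.log (prob μ (fun ω => (U ω, V ω)) (s.1, s.2.1)))
      - (∑ s : A × B × 𝒳 × 𝒴₁, prob μ (fun ω => (U ω, V ω, X ω, Y1 ω)) s *
          Real.log (prob μ (fun ω => (X ω, Y1 ω)) (s.2.2.1, s.2.2.2)))
      - (∑ s : A × B × 𝒳 × 𝒴₁, prob μ (fun ω => (U ω, V ω, X ω, Y1 ω)) s *
          Real.log (prob μ Y1 s.2.2.2)) ≤ 0 := by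
    rw [← Finset.sum_add_distrib, ← Finset.sum_add_distrib, ← Finset.sum_sub_distrib,
      ← Finset.sum_sub_distrib, ← Finset.sum_sub_distrib]
    calc _ = ∑ s : A × B × 𝒳 × 𝒴₁,
        prob μ (fun ω => (U ω, V ω, X ω, Y1 ω)) s *
          (Real.log (prob μ (fun ω => (U ω, Y1 ω)) (s.1, s.2.2.2))
            + Real.log (prob μ (fun ω => (V ω, Y1 ω)) (s.2.1, s.2.2.2))
            + Real.log (prob μ X s.2.2.1)
            - Real.log (prob μ (fun ω => (U ω, V ω)) (s.1, s.2.1))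
            - Real.log (prob μ (fun ω => (X ω, Y1 ω)) (s.2.2.1, s.2.2.2))
            - Real.log (prob μ Y1 s.2.2.2)) := by
          exact Finset.sum_congr rfl fun s _ => by ring
      _ ≤ 0 := key
  simp only [mutualInfo]
  linarith [key', hEUV, hEXY, hEY, hEUY, hEVY, hEX]
end
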